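/- Let F be an algebraic number field with ring of integers O_F, let p be a rational prime, and let P(X) = X^{p^n} + aX^{p^s} − b ∈ O_F[X] be a monic irreducible (not necessarily monogenic) trinomial with n > s ≥ 0 and middle coefficient a = v·b divisible by the absolute coefficient b. Let θ be a root of P and E = F(θ), of degree [E:F] = p^n. Then N_{E/F}(θ) = (−1)^{p^n−1}·b, the element U := (−1)^{p^n−1}(1 − v·θ^{p^s}) is a unit of O_E, and θ generates an ambiguous principal ideal of E/F, i.e., (θ·O_E)^{p^n} = (b·O_F)·O_E. -/

import Mathlib

open NumberField Polynomial

/-- For a monic irreducible (not necessarily monogenic) trinomial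
`P(X) = X^(p^n) + a·X^(p^s) − b` over the ring of integers of a number field `F`, with `p`
prime, `n > s ≥ 0` and middle coefficient `a = v·b` divisible by the absolute coefficient
`b`, a root `θ` of `P` generating the extension `E = F(θ)` of degree `p^n` satisfies:
`N_{E/F}(θ) = (−1)^(p^n−1)·b`, the element `(−1)^(p^n−1)·(1 − v·θ^(p^s))` is a unit of
`𝓞 E`, and `θ` generates an ambiguous principal ideal: `(θ·𝓞 E)^(p^n) = (b·𝓞 F)·𝓞 E`. -/
theorem prime_power_trinomial_root_generates_ambiguous_principal_ideal
    (F E : Type*) [Field F] [NumberField F] [Field E] [NumberField E]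
    [Algebra F E]
    (p : ℕ) (hp : p.Prime) (n s : ℕ) (hns : s < n)
    (a b v : 𝓞 F) (hab : a = v * b)
    (P : Polynomial F) (hP : P = X ^ (p ^ n) + C (a : F) * X ^ (p ^ s) - C (b : F))
    (hirr : Irreducible P)
    (θ : 𝓞 E) (hroot : Polynomial.aeval ((θ : E)) P = 0)
    (hgen : IntermediateField.adjoin F {((θ : E))} = ⊤)
    (hdeg : Module.finrank F E = p ^ n) :
    Algebra.norm F ((θ : E)) = (-1 : F) ^ (p ^ n - 1) * (b : F) ∧
    IsUnit ((-1 : 𝓞 E) ^ (p ^ n - 1) * (1 - algebraMap (𝓞 F) (𝓞 E) v * θ ^ (p ^ s))) ∧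
    (Ideal.span {θ} : Ideal (𝓞 E)) ^ (p ^ n) =
      Ideal.map (algebraMap (𝓞 F) (𝓞 E)) (Ideal.span {b}) := by
  have hpn1 : 1 ≤ p ^ n := Nat.one_le_pow _ _ hp.pos
  have hlt : p ^ s < p ^ n := Nat.pow_lt_pow_right hp.one_lt hns
  have hps : 0 < p ^ s := Nat.pow_pos hp.pos
  have hpn2 : 2 ≤ p ^ n := by
    calc 2 = 2 ^ 1 := Nat.pow_one 2 |>.symm
    _ ≤ p ^ n := Nat.pow_le_pow_left hp.two_le 1 |>.trans (Nat.pow_le_pow_right hp.pos (by omega))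
  have hFD : FiniteDimensional F E := FiniteDimensional.of_finrank_pos (by omega)
  -- b ≠ 0
  have hb : b ≠ 0 := by
    intro h
    rw [h, hab, h, mul_zero] at hP
    simp only [map_zero, zero_mul, add_zero, sub_zero] at hP
    rw [hP] at hirr
    rcases hirr.isUnit_or_isUnit (show (X : F[X]) ^ (p ^ n) = X * X ^ (p ^ n - 1) by
      rw [← pow_succ']; congr 1; omega) with h1 | h1
    · exact Polynomial.not_isUnit_X h1
    · exact Polynomial.not_isUnit_X ((isUnit_pow_iff (by omega)).mp h1)
  -- monic
  have hmonic : P.Monic := by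
    rw [hP, sub_eq_add_neg, add_assoc]
    apply Polynomial.monic_X_pow_add
    apply lt_of_le_of_lt (Polynomial.degree_add_le _ _)
    apply max_lt
    · exact lt_of_le_of_lt (Polynomial.degree_C_mul_X_pow_le _ _) (by exact_mod_cast hlt)
    · refine lt_of_le_of_lt ((Polynomial.degree_neg (C (b : F))) ▸ Polynomial.degree_C_le) ?_
      exact_mod_cast (by omega : 0 < p ^ n)
  have hmin : minpoly F ((θ : E)) = P := (minpoly.eq_of_irreducible_of_monic hirr hroot hmonic).symm
  have hc0 : P.coeff 0 = -(b : F) := by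
    rw [hP]
    simp only [Polynomial.coeff_sub, Polynomial.coeff_add, Polynomial.coeff_X_pow,
      Polynomial.coeff_C_mul, Polynomial.coeff_C]
    rw [if_neg (by omega), if_neg (by omega)]
    simp
  -- power basis
  have hint : IsIntegral F ((θ : E)) := Algebra.IsIntegral.isIntegral _
  let pb : PowerBasis F E :=
    (IntermediateField.adjoin.powerBasis hint).map
      ((IntermediateField.equivOfEq hgen).trans IntermediateField.topEquiv)
  have hpbgen : pb.gen = (θ : E) := by
    simp [pb, IntermediateField.adjoin.powerBasis, PowerBasis.map_gen]
  have hpbdim : pb.dim = p ^ n := by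
    rw [← pb.finrank, hdeg]
  -- norm of θ
  have hnorm : Algebra.norm F ((θ : E)) = (-1 : F) ^ (p ^ n - 1) * (b : F) := by
    have := Algebra.PowerBasis.norm_gen_eq_coeff_zero_minpoly pb
    rw [hpbgen, hpbdim, hmin, hc0] at this
    have h1 : (-1 : F) ^ (p ^ n) = (-1) ^ (p ^ n - 1) * (-1) := by
      rw [← pow_succ]; congr 1; omega
    rw [this, h1]; ring
  -- key equation in 𝓞 E
  set u : 𝓞 E := 1 - algebraMap (𝓞 F) (𝓞 E) v * θ ^ (p ^ s) with hu
  have hkey : θ ^ (p ^ n) = algebraMap (𝓞 F) (𝓞 E) b * u := by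
    have h0 : (θ : E) ^ p ^ n + algebraMap F E (a : F) * (θ : E) ^ p ^ s
        - algebraMap F E (b : F) = 0 := by
      rw [hP] at hroot
      simpa using hroot
    have hab' : (algebraMap F E (a : F)) = algebraMap F E (v : F) * algebraMap F E (b : F) := by
      rw [← map_mul]; congr 1; exact_mod_cast congrArg (algebraMap (𝓞 F) F) hab
    apply RingOfIntegers.coe_injective (K := E)
    show algebraMap (𝓞 E) E (θ ^ p ^ n) = algebraMap (𝓞 E) E (algebraMap (𝓞 F) (𝓞 E) b * u)
    rw [hu, map_pow, map_mul, map_sub, map_one, map_mul, map_pow]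
    have hc : ∀ x : 𝓞 F,
        algebraMap (𝓞 E) E (algebraMap (𝓞 F) (𝓞 E) x) = algebraMap F E (x : F) := fun x => rfl
    rw [hc, hc]
    show (θ : E) ^ p ^ n = algebraMap F E (b : F) * (1 - algebraMap F E (v : F) * (θ : E) ^ p ^ s)
    linear_combination h0 - (θ : E) ^ p ^ s * hab'
  -- norm of θ at integer level
  have hNθ : RingOfIntegers.norm F θ = (-1 : 𝓞 F) ^ (p ^ n - 1) * b := by
    apply RingOfIntegers.coe_injective (K := F)
    show ((RingOfIntegers.norm F θ : 𝓞 F) : F) = (((-1 : 𝓞 F) ^ (p ^ n - 1) * b : 𝓞 F) : F)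
    rw [RingOfIntegers.coe_norm, hnorm]
    push_cast
    ring
  -- norm of u
  have hNu : RingOfIntegers.norm F u = ((-1 : 𝓞 F) ^ (p ^ n - 1)) ^ (p ^ n) := by
    have h := congrArg (RingOfIntegers.norm F) hkey
    rw [map_pow, map_mul, RingOfIntegers.norm_algebraMap, hdeg, hNθ, mul_pow] at h
    exact (mul_left_cancel₀ (pow_ne_zero _ hb) (by rw [← h]; ring)).symm
  have huu : IsUnit u := by
    rw [NumberField.isUnit_iff_norm, ← RingOfIntegers.norm_norm ℚ F u, hNu, ← pow_mul,
      show ((-1 : 𝓞 F)) = algebraMap (𝓞 ℚ) (𝓞 F) (-1) by simp, ← map_pow,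
      RingOfIntegers.norm_algebraMap, ← pow_mul]
    rw [show (((-1 : 𝓞 ℚ) ^ ((p ^ n - 1) * p ^ n * Module.finrank ℚ F) : 𝓞 ℚ) : ℚ)
        = ((-1 : ℚ)) ^ ((p ^ n - 1) * p ^ n * Module.finrank ℚ F) by push_cast; ring]
    rw [abs_pow, abs_neg, abs_one, one_pow]
  refine ⟨hnorm, (IsUnit.pow _ isUnit_one.neg).mul huu, ?_⟩
  rw [Ideal.span_singleton_pow, Ideal.map_span, Set.image_singleton, hkey,
    Ideal.span_singleton_mul_right_unit huu]
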